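/- Let G be a bi-orderable group and let t, a ∈ G. Set b = t a t⁻¹ and c = t² a t⁻². If b (a c) b⁻¹ = (a c)², then a = 1. -/

import Mathlib

/-- A group is bi-orderable if there is a linear (strict total) order on it which is
invariant under both left and right multiplication. -/
def IsBiOrderable (G : Type*) [Group G] : Prop :=
  ∃ lt : G → G → Prop, IsStrictTotalOrder G lt ∧
    (∀ f g h : G, lt g h → lt (f * g) (f * h)) ∧
    (∀ f g h : G, lt g h → lt (g * f) (h * f))

/-- Auxiliary lemma: with a bi-invariant strict order, the hypotheses with `1 < a`
lead to a contradiction. -/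
private lemma biorder_aux_false {G : Type*} [Group G] (lt : G → G → Prop)
    (irr : ∀ g : G, ¬ lt g g)
    (htrans : ∀ x y z : G, lt x y → lt y z → lt x z)
    (hL : ∀ f g h : G, lt g h → lt (f * g) (f * h))
    (hR : ∀ f g h : G, lt g h → lt (g * f) (h * f))
    (t a : G)
    (h : (t * a * t⁻¹) * (a * (t ^ 2 * a * (t ^ 2)⁻¹)) * (t * a * t⁻¹)⁻¹
        = (a * (t ^ 2 * a * (t ^ 2)⁻¹)) ^ 2)
    (ha : lt 1 a) : False := by
  have conj_pos : ∀ f g : G, lt 1 g → lt 1 (f * g * f⁻¹) := by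
    intro f g hg
    have h1 := hL f 1 g hg
    have h2 := hR f⁻¹ (f * 1) (f * g) h1
    simpa using h2
  have key : ∀ u x : G, u * x * u⁻¹ = x ^ 2 → lt 1 u → lt x u := by
    intro u x e hu
    have h1 : u * x = x * x * u := by rw [← sq, ← e]; group
    have e2 : x * u * x⁻¹ = x⁻¹ * u := by
      have h3 : x * (x * u * x⁻¹) = x * (x⁻¹ * u) := by
        calc x * (x * u * x⁻¹) = (x * x * u) * x⁻¹ := by group
          _ = (u * x) * x⁻¹ := by rw [← h1]
          _ = x * (x⁻¹ * u) := by group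
      exact mul_left_cancel h3
    have hp : lt 1 (x⁻¹ * u) := e2 ▸ conj_pos x u hu
    have h4 := hL x 1 (x⁻¹ * u) hp
    simpa using h4
  set b := t * a * t⁻¹ with hb
  set c := t ^ 2 * a * (t ^ 2)⁻¹ with hc
  set d := t⁻¹ * a * t with hd
  have hbpos : lt 1 b := conj_pos t a ha
  have hcpos : lt 1 c := conj_pos (t ^ 2) a ha
  have hdpos : lt 1 d := by
    have h5 := conj_pos t⁻¹ a ha
    rw [inv_inv] at h5
    exact h5
  have k1 : lt (a * c) b := key b (a * c) h hbpos
  have h2 : a * (d * b) * a⁻¹ = (d * b) ^ 2 := by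
    have e := congrArg (fun g : G => t⁻¹ * g * t) h
    calc a * (d * b) * a⁻¹ = t⁻¹ * (b * (a * c) * b⁻¹) * t := by
          simp only [hb, hc, hd, pow_two]; group
      _ = t⁻¹ * ((a * c) ^ 2) * t := by exact e
      _ = (d * b) ^ 2 := by simp only [hb, hc, hd, pow_two]; group
  have k2 : lt (d * b) a := key a (d * b) h2 ha
  have s1 : lt a (a * c) := by simpa using hL a 1 c hcpos
  have s2 : lt b (d * b) := by simpa using hR b 1 d hdpos
  exact irr a (htrans _ _ _ (htrans _ _ _ (htrans _ _ _ s1 k1) s2) k2)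

/-- In a bi-orderable group, if `b = t a t⁻¹`, `c = t² a t⁻²` and
`b (a c) b⁻¹ = (a c)²`, then `a = 1`. -/
theorem eq_one_of_biorderable {G : Type*} [Group G] (hG : IsBiOrderable G) (t a b c : G)
    (hb : b = t * a * t⁻¹) (hc : c = t ^ 2 * a * (t ^ 2)⁻¹)
    (h : b * (a * c) * b⁻¹ = (a * c) ^ 2) : a = 1 := by
  obtain ⟨lt, hsto, hL, hR⟩ := hG
  have irr : ∀ g : G, ¬ lt g g := fun g => hsto.toIsStrictOrder.toIrrefl.irrefl g
  have htrans : ∀ x y z : G, lt x y → lt y z → lt x z :=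
    fun x y z => hsto.toIsStrictOrder.toIsTrans.trans x y z
  subst hb hc
  rcases (haveI := hsto; trichotomous_of lt a 1) with h1 | h1 | h1
  · exact (biorder_aux_false (fun x y => lt y x) irr
      (fun x y z hxy hyz => htrans z y x hyz hxy)
      (fun f g h' hgh => hL f h' g hgh) (fun f g h' hgh => hR f h' g hgh) t a h h1).elim
  · exact h1
  · exact (biorder_aux_false lt irr htrans hL hR t a h h1).elim
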